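/- Let t1, t2 be integers such that t1 < -1 or t2 < 0. Then there exist real numbers u1 > 0 and u2 > 1 such that 2*(u1 + (t1 + 1))*(u2 + (t2 - 1)) - 2*t1*t2 + t1 - t2 = 0. -/
import Mathlib


theorem stmt_3 (t1 t2 : ℤ) (ht : t1 < -1 ∨ t2 < 0) :
    ∃ u1 u2 : ℝ, 0 < u1 ∧ 1 < u2 ∧
      2 * (u1 + ((t1 : ℝ) + 1)) * (u2 + ((t2 : ℝ) - 1)) - 2 * t1 * t2 + t1 - t2 = 0 := by
  set C : ℝ := 2 * (t1 : ℝ) * t2 - t1 + t2 with hCdef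
  rcases le_or_gt t1 (-2) with h1 | h1
  · -- t1 ≤ -2 : take b large, a = C/(2b) with |a| < 1
    have h1' : (t1 : ℝ) ≤ -2 := by exact_mod_cast h1
    set b : ℝ := |C| + |(t2 : ℝ)| + 1 with hbdef
    have habsC : C ≤ |C| ∧ -C ≤ |C| := ⟨le_abs_self C, neg_le_abs C⟩
    have habs2 : (t2 : ℝ) ≤ |(t2 : ℝ)| := le_abs_self _
    have hb0 : 0 < b := by positivity
    refine ⟨C / (2 * b) - t1 - 1, b - t2 + 1, ?_, ?_, ?_⟩
    · have : (-1 : ℝ) < C / (2 * b) := by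
        rw [lt_div_iff₀ (by positivity)]
        have h1 : (0:ℝ) ≤ |C| := abs_nonneg _
        have h2 : (0:ℝ) ≤ |(t2:ℝ)| := abs_nonneg _
        nlinarith [habsC.2]
      linarith
    · nlinarith [abs_nonneg C]
    · field_simp
      ring
  · -- t1 ≥ -1
    rcases lt_or_ge t1 0 with h0 | h0
    · -- t1 = -1, so t2 < 0, C = 1 - t2 ≥ 2
      have h : t1 = -1 := by omega
      subst h
      have ht2 : t2 < 0 := by omega
      have ht2z : t2 ≤ -1 := by omega
      have ht2' : (t2 : ℝ) ≤ -1 := by exact_mod_cast ht2z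
      have hC : C = 1 - t2 := by rw [hCdef]; push_cast; ring
      refine ⟨1/2 - ((-1 : ℤ) : ℝ) - 1, C - t2 + 1, ?_, ?_, ?_⟩
      · norm_num
      · rw [hC]; linarith
      · ring
    · -- t1 ≥ 0, t2 < 0, C ≤ -1
      have ht1 : (0:ℤ) ≤ t1 := h0
      have ht2 : t2 < 0 := by omega
      have hCneg : (2 * t1 * t2 - t1 + t2 : ℤ) ≤ -1 := by nlinarith
      have hCr : C ≤ -1 := by
        rw [hCdef]
        exact_mod_cast hCneg
      have ht1' : (0:ℝ) ≤ (t1:ℝ) := by exact_mod_cast ht1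
      have ht2z : t2 ≤ -1 := by omega
      have ht2' : (t2:ℝ) ≤ -1 := by exact_mod_cast ht2z
      have hpos : (0:ℝ) < (t1:ℝ) + 2 := by linarith
      refine ⟨-C * ((t1:ℝ) + 2) - t1 - 1, -(1 / (2 * ((t1:ℝ) + 2))) - t2 + 1, ?_, ?_, ?_⟩
      · nlinarith
      · have : 1 / (2 * ((t1:ℝ) + 2)) ≤ 1 / 2 := by
          apply div_le_div_of_nonneg_left <;> linarith
        linarith
      · field_simp
        ring
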